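/- Let T be a Hausdorff tree, α a limit ordinal of cofinality κ, H ⊆ T_α, and (α_ξ)_{ξ<κ} a cofinal sequence in α. Suppose π : H → ⋃_{ξ<κ} T_{α_ξ} is a regressive map such that every fibre π^{-1}(w) is simple. Then H is simple. -/

import Mathlib

open Set

/-- A partial order is a tree order if the set of strict predecessors of
each element is well-ordered. -/
def IsTreeOrder (T : Type) [PartialOrder T] : Prop :=
  ∀ x : T, IsWellOrder {y : T // y < x} (fun a b => (a : T) < (b : T))

/-- The height of an element of a tree: the order type of its set of strict
predecessors. -/
noncomputable def treeHt {T : Type} [PartialOrder T] (hT : IsTreeOrder T) (x : T) : Ordinal :=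
  @Ordinal.type {y : T // y < x} (fun a b => (a : T) < (b : T)) (hT x)

/-- The level of a tree of order `α`. -/
def treeLevel {T : Type} [PartialOrder T] (hT : IsTreeOrder T) (α : Ordinal) : Set T :=
  {x : T | treeHt hT x = α}

/-- `f` is a cofinal sequence in the limit ordinal `α`: it is a strictly increasing
`cf α`-indexed sequence of ordinals below `α` whose supremum is `α`. -/
def IsCofinalSeq (α : Ordinal) (f : Ordinal → Ordinal) : Prop :=
  (∀ ξ η : Ordinal, ξ < η → η < α.cof.ord → f ξ < f η) ∧
  (∀ ξ : Ordinal, ξ < α.cof.ord → f ξ < α) ∧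
  (∀ β : Ordinal, β < α → ∃ ξ : Ordinal, ξ < α.cof.ord ∧ β ≤ f ξ)

/-- A subset `H` of the level `T_α` (`α` a limit ordinal) is simple if for some
cofinal sequence `(α_ξ)_{ξ < cf α}` in `α` there is an injective regressive map
from `H` into `⋃_{ξ < cf α} T_{α_ξ}`. -/
def TreeSimple {T : Type} [PartialOrder T] (hT : IsTreeOrder T) (α : Ordinal)
    (H : Set T) : Prop :=
  ∃ f : Ordinal → Ordinal, IsCofinalSeq α f ∧
    ∃ π : T → T, Set.InjOn π H ∧
      ∀ x ∈ H, π x < x ∧ ∃ ξ : Ordinal, ξ < α.cof.ord ∧ treeHt hT (π x) = f ξ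

/-- A tree is Hausdorff if every nonempty totally ordered subset has at most one
minimal upper bound. -/
def IsHausdorffTree (T : Type) [PartialOrder T] : Prop :=
  ∀ A : Set T, A.Nonempty → IsChain (· ≤ ·) A → ∀ u v : T,
    u ∈ upperBounds A → (∀ w ∈ upperBounds A, ¬ w < u) →
    v ∈ upperBounds A → (∀ w ∈ upperBounds A, ¬ w < v) → u = v

/-- The interval topology on a tree, generated by the sets `(x, z]` and `(0, z]`. -/
def intervalTopology (T : Type) [PartialOrder T] : TopologicalSpace T :=
  TopologicalSpace.generateFrom
    ({s : Set T | ∃ x z : T, s = Set.Ioc x z} ∪ {s : Set T | ∃ z : T, s = Set.Iic z})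

section auxStmt8

open Ordinal Cardinal in
private theorem exists_pairing (κ : Cardinal) (hκ : Cardinal.aleph0 ≤ κ) :
    ∃ p : Ordinal → Ordinal → Ordinal,
      (∀ a b, a < κ.ord → b < κ.ord → p a b < κ.ord ∧ a ≤ p a b ∧ b ≤ p a b) ∧
      (∀ a b a' b', a < κ.ord → b < κ.ord → a' < κ.ord → b' < κ.ord →
        p a b = p a' b' → a = a' ∧ b = b') := by
  classical
  haveI : IsWellOrder κ.ord.ToType ((· < ·) : κ.ord.ToType → κ.ord.ToType → Prop) := isWellOrder_lt
  set L3 : (κ.ord.ToType × κ.ord.ToType × κ.ord.ToType) →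
      (κ.ord.ToType × κ.ord.ToType × κ.ord.ToType) → Prop :=
    Prod.Lex (· < ·) (Prod.Lex (· < ·) (· < ·)) with hL3
  haveI hL3wo : IsWellOrder _ L3 := by rw [hL3]; infer_instance
  set e : κ.ord.ToType × κ.ord.ToType → κ.ord.ToType × κ.ord.ToType × κ.ord.ToType :=
    fun s => (max s.1 s.2, s.1, s.2) with he
  have einj : Function.Injective e := by
    intro s t h
    have h2 : s.1 = t.1 := congrArg (fun z => z.2.1) h
    have h3 : s.2 = t.2 := congrArg (fun z => z.2.2) h
    exact Prod.ext h2 h3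
  set R : (κ.ord.ToType × κ.ord.ToType) → (κ.ord.ToType × κ.ord.ToType) → Prop :=
    InvImage L3 e with hR
  have hRemb : R ↪r L3 := ⟨⟨e, einj⟩, Iff.rfl⟩
  haveI hwo : IsWellOrder (κ.ord.ToType × κ.ord.ToType) R := hRemb.isWellOrder
  set q : κ.ord.ToType × κ.ord.ToType → Ordinal := fun s => Ordinal.typein R s with hq
  set val : κ.ord.ToType → Ordinal := fun t => Ordinal.typein (· < ·) t with hval
  -- basic facts
  have hvlt : ∀ t : κ.ord.ToType, val t < κ.ord := fun t => Ordinal.typein_lt_self t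
  have hvsurj : ∀ {β : Ordinal}, β < κ.ord → ∃ t : κ.ord.ToType, val t = β := by
    intro β hβ
    have hβ' : β < Ordinal.type ((· < ·) : κ.ord.ToType → κ.ord.ToType → Prop) := by
      rwa [Ordinal.type_toType]
    obtain ⟨t, ht⟩ := Ordinal.typein_surj _ hβ'
    exact ⟨t, ht⟩
  have hRdiag : ∀ {s t : κ.ord.ToType}, s < t → R (s, s) (t, t) := by
    intro s t hst
    apply Prod.Lex.left
    simpa using hst
  have hRleft : ∀ {u : κ.ord.ToType} {s : κ.ord.ToType × κ.ord.ToType},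
      u < max s.1 s.2 → R (u, u) s := by
    intro u s hu
    apply Prod.Lex.left
    simpa using hu
  have hdom : ∀ t : κ.ord.ToType, val t ≤ q (t, t) := by
    intro t
    induction t using WellFoundedLT.induction with
    | ind t IH =>
      apply le_of_forall_lt
      intro δ hδ
      have hδ' : δ < Ordinal.type ((· < ·) : κ.ord.ToType → κ.ord.ToType → Prop) :=
        hδ.trans (Ordinal.typein_lt_type _ t)
      obtain ⟨s, hs⟩ := Ordinal.typein_surj _ hδ'
      have hst : s < t := by
        have h1 : val s < val t := hs.trans_lt hδ
        exact (Ordinal.typein_lt_typein _).1 h1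
      calc δ = val s := hs.symm
        _ ≤ q (s, s) := IH s hst
        _ < q (t, t) := (Ordinal.typein_lt_typein R).2 (hRdiag hst)
  have hdom2 : ∀ s : κ.ord.ToType × κ.ord.ToType, val s.1 ≤ q s ∧ val s.2 ≤ q s := by
    have key : ∀ (s : κ.ord.ToType × κ.ord.ToType) (u : κ.ord.ToType),
        u ≤ max s.1 s.2 → val u ≤ q s := by
      intro s u hu
      apply le_of_forall_lt
      intro δ hδ
      have hδ' : δ < Ordinal.type ((· < ·) : κ.ord.ToType → κ.ord.ToType → Prop) :=
        hδ.trans (Ordinal.typein_lt_type _ u)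
      obtain ⟨v, hv⟩ := Ordinal.typein_surj _ hδ'
      have hvu : v < u := by
        have h1 : val v < val u := hv.trans_lt hδ
        exact (Ordinal.typein_lt_typein _).1 h1
      calc δ = val v := hv.symm
        _ ≤ q (v, v) := hdom v
        _ < q s := (Ordinal.typein_lt_typein R).2 (hRleft (lt_of_lt_of_le hvu hu))
    exact fun s => ⟨key s s.1 (le_max_left _ _), key s s.2 (le_max_right _ _)⟩
  have hbound : ∀ s : κ.ord.ToType × κ.ord.ToType, q s < κ.ord := by
    intro s
    rw [Cardinal.lt_ord]
    have hcard : (q s).card = Cardinal.mk {y : κ.ord.ToType × κ.ord.ToType // R y s} :=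
      (Ordinal.card_typein _).symm
    rw [hcard]
    have hsub : Cardinal.mk {u : κ.ord.ToType // u ≤ max s.1 s.2} < κ := by
      have h1 : Cardinal.mk {u : κ.ord.ToType // u < max s.1 s.2} =
          (Ordinal.typein ((· < ·) : κ.ord.ToType → κ.ord.ToType → Prop) (max s.1 s.2)).card :=
        Ordinal.card_typein (max s.1 s.2)
      have h2 : Cardinal.mk {u : κ.ord.ToType // u < max s.1 s.2} < κ := by
        rw [h1, ← Cardinal.lt_ord]; exact hvlt (max s.1 s.2)
      have hinj : Function.Injective (fun u : {u : κ.ord.ToType // u ≤ max s.1 s.2} =>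
          if h : u.1 < max s.1 s.2 then
            (some ⟨u.1, h⟩ : Option {u : κ.ord.ToType // u < max s.1 s.2}) else none) := by
        intro u v huv
        dsimp only at huv
        by_cases hu : u.1 < max s.1 s.2 <;> by_cases hv : v.1 < max s.1 s.2
        · rw [dif_pos hu, dif_pos hv] at huv
          have h' := Option.some.inj huv
          exact Subtype.ext (Subtype.mk_eq_mk.1 h')
        · rw [dif_pos hu, dif_neg hv] at huv
          exact absurd huv (Option.some_ne_none _)
        · rw [dif_neg hu, dif_pos hv] at huv
          exact absurd huv.symm (Option.some_ne_none _)
        · exact Subtype.ext ((le_antisymm u.2 (not_lt.1 hu)).trans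
            (le_antisymm v.2 (not_lt.1 hv)).symm)
      calc Cardinal.mk {u : κ.ord.ToType // u ≤ max s.1 s.2}
          ≤ Cardinal.mk (Option {u : κ.ord.ToType // u < max s.1 s.2}) :=
            Cardinal.mk_le_of_injective hinj
        _ = Cardinal.mk {u : κ.ord.ToType // u < max s.1 s.2} + 1 := Cardinal.mk_option
        _ < κ := Cardinal.add_lt_of_lt hκ h2 (lt_of_lt_of_le Cardinal.one_lt_aleph0 hκ)
    have hmem : ∀ y : κ.ord.ToType × κ.ord.ToType, R y s →
        y.1 ≤ max s.1 s.2 ∧ y.2 ≤ max s.1 s.2 := by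
      intro y hy
      have hylex := Prod.lex_def.1 (show L3 (e y) (e s) from hy)
      have hmax : max y.1 y.2 ≤ max s.1 s.2 := by
        rcases hylex with h | h
        · exact le_of_lt h
        · exact le_of_eq h.1
      exact ⟨le_trans (le_max_left _ _) hmax, le_trans (le_max_right _ _) hmax⟩
    have hinj2 : Function.Injective
        (fun y : {y : κ.ord.ToType × κ.ord.ToType // R y s} =>
        ((⟨y.1.1, (hmem y.1 y.2).1⟩ : {u : κ.ord.ToType // u ≤ max s.1 s.2}),
         (⟨y.1.2, (hmem y.1 y.2).2⟩ : {u : κ.ord.ToType // u ≤ max s.1 s.2}))) := by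
      intro y z hyz
      apply Subtype.ext
      have h1 := congrArg (fun w => w.1.1) hyz
      have h2 := congrArg (fun w => w.2.1) hyz
      exact Prod.ext h1 h2
    calc Cardinal.mk {y : κ.ord.ToType × κ.ord.ToType // R y s}
        ≤ Cardinal.mk ({u : κ.ord.ToType // u ≤ max s.1 s.2} ×
            {u : κ.ord.ToType // u ≤ max s.1 s.2}) := Cardinal.mk_le_of_injective hinj2
      _ = Cardinal.mk {u : κ.ord.ToType // u ≤ max s.1 s.2} *
            Cardinal.mk {u : κ.ord.ToType // u ≤ max s.1 s.2} := by
          simp only [Cardinal.mk_prod, Cardinal.lift_id]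
      _ < κ := Cardinal.mul_lt_of_lt hκ hsub hsub
  -- define p
  refine ⟨fun a b => if h : a < κ.ord ∧ b < κ.ord then
    q ((hvsurj h.1).choose, (hvsurj h.2).choose) else 0, ?_, ?_⟩
  · intro a b ha hb
    dsimp only
    rw [dif_pos (And.intro ha hb)]
    refine ⟨hbound _, ?_, ?_⟩
    · have h1 := (hdom2 ((hvsurj ha).choose, (hvsurj hb).choose)).1
      rwa [(hvsurj ha).choose_spec] at h1
    · have h1 := (hdom2 ((hvsurj ha).choose, (hvsurj hb).choose)).2
      rwa [(hvsurj hb).choose_spec] at h1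
  · intro a b a' b' ha hb ha' hb' hpq
    dsimp only at hpq
    rw [dif_pos (And.intro ha hb), dif_pos (And.intro ha' hb')] at hpq
    have heq := Ordinal.typein_injective R hpq
    have h1 : (hvsurj ha).choose = (hvsurj ha').choose := congrArg Prod.fst heq
    have h2 : (hvsurj hb).choose = (hvsurj hb').choose := congrArg Prod.snd heq
    constructor
    · rw [← (hvsurj ha).choose_spec, ← (hvsurj ha').choose_spec, h1]
    · rw [← (hvsurj hb).choose_spec, ← (hvsurj hb').choose_spec, h2]



lemma treeHt_eq_typein {T : Type} [PartialOrder T] (hT : IsTreeOrder T) {x y : T} (h : y < x) :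
    treeHt hT y =
      @Ordinal.typein {z : T // z < x} (fun a b => (a : T) < (b : T)) (hT x) ⟨y, h⟩ := by
  haveI := hT x
  haveI := hT y
  rw [← Ordinal.type_subrel]
  refine Ordinal.type_eq.2 ⟨?_⟩
  exact ⟨Equiv.mk (fun a => ⟨⟨a.1, lt_trans a.2 h⟩, a.2⟩) (fun b => ⟨b.1.1, b.2⟩)
    (fun _ => rfl) (fun _ => rfl), Iff.rfl⟩

lemma treeHt_lt_of_lt {T : Type} [PartialOrder T] (hT : IsTreeOrder T) {x y : T} (h : y < x) :
    treeHt hT y < treeHt hT x := by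
  haveI := hT x
  rw [treeHt_eq_typein hT h]
  exact Ordinal.typein_lt_type _ _

lemma treeHt_surj {T : Type} [PartialOrder T] (hT : IsTreeOrder T) {x : T} {β : Ordinal}
    (h : β < treeHt hT x) : ∃ y, y < x ∧ treeHt hT y = β := by
  haveI := hT x
  obtain ⟨a, ha⟩ := Ordinal.typein_surj (fun a b : {y : T // y < x} => (a : T) < (b : T)) h
  exact ⟨a.1, a.2, by rw [treeHt_eq_typein hT a.2]; exact ha⟩

lemma pred_le_of_ht_le {T : Type} [PartialOrder T] (hT : IsTreeOrder T) {x u v : T}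
    (hu : u < x) (hv : v < x) (h : treeHt hT u ≤ treeHt hT v) : u ≤ v := by
  haveI := hT x
  rcases @trichotomous _ (fun a b : {y : T // y < x} => (a : T) < (b : T)) _ ⟨u, hu⟩ ⟨v, hv⟩
    with hlt | heq | hgt
  · exact le_of_lt hlt
  · exact le_of_eq (congrArg Subtype.val heq)
  · exact absurd (treeHt_lt_of_lt hT hgt) (not_lt.2 h)

lemma pred_eq_of_ht_eq {T : Type} [PartialOrder T] (hT : IsTreeOrder T) {x u v : T}
    (hu : u < x) (hv : v < x) (h : treeHt hT u = treeHt hT v) : u = v :=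
  le_antisymm (pred_le_of_ht_le hT hu hv h.le) (pred_le_of_ht_le hT hv hu h.ge)

lemma le_pred_eq {T : Type} [PartialOrder T] (hT : IsTreeOrder T) {y u v : T}
    (hu : u ≤ y) (hv : v ≤ y) (h : treeHt hT u = treeHt hT v) : u = v := by
  rcases hu.lt_or_eq with hu' | rfl
  · rcases hv.lt_or_eq with hv' | rfl
    · exact pred_eq_of_ht_eq hT hu' hv' h
    · exact absurd h (ne_of_lt (treeHt_lt_of_lt hT hu'))
  · rcases hv.lt_or_eq with hv' | rfl
    · exact absurd h.symm (ne_of_lt (treeHt_lt_of_lt hT hv'))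
    · rfl


end auxStmt8

/-- If `π : H → ⋃_{ξ<κ} T_{α_ξ}` is a regressive map on `H ⊆ T_α` all of whose fibres
are simple, then `H` is simple. -/
theorem stmt_8 {T : Type} [PartialOrder T] (hT : IsTreeOrder T) (hHaus : IsHausdorffTree T)
    (α : Ordinal) (hα : Order.IsSuccLimit α) (H : Set T) (hH : H ⊆ treeLevel hT α)
    (f : Ordinal → Ordinal) (hf : IsCofinalSeq α f)
    (π : T → T) (hπreg : ∀ x ∈ H, π x < x)
    (hπmem : ∀ x ∈ H, ∃ ξ : Ordinal, ξ < α.cof.ord ∧ treeHt hT (π x) = f ξ)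
    (hfib : ∀ w : T, TreeSimple hT α {x ∈ H | π x = w}) :
    TreeSimple hT α H := by
  classical
  have hκ : Cardinal.aleph0 ≤ α.cof := Ordinal.aleph0_le_cof.2 hα
  obtain ⟨p, hp1, hp2⟩ := exists_pairing α.cof hκ
  choose F hFc P hPinj hPspec using hfib
  have hmemfib : ∀ x (hx : x ∈ H), x ∈ {z | z ∈ H ∧ π z = π x} := fun x hx => ⟨hx, rfl⟩
  have hPreg : ∀ x, x ∈ H → P (π x) x < x := fun x hx => (hPspec (π x) x (hmemfib x hx)).1
  have hPht : ∀ x (_ : x ∈ H), ∃ ξ, ξ < α.cof.ord ∧ treeHt hT (P (π x) x) = F (π x) ξ :=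
    fun x hx => (hPspec (π x) x (hmemfib x hx)).2
  choose η hη1 hη2 using hPht
  choose a ha1 ha2 using hπmem
  have hxht : ∀ x, x ∈ H → treeHt hT x = α := fun x hx => hH hx
  have huht : ∀ x (hx : x ∈ H), treeHt hT (P (π x) x) < α := by
    intro x hx
    have h1 := treeHt_lt_of_lt hT (hPreg x hx)
    rwa [hxht x hx] at h1
  have hcex : ∀ x (hx : x ∈ H), ∃ ξ, ξ < α.cof.ord ∧ treeHt hT (P (π x) x) ≤ f ξ :=
    fun x hx => hf.2.2 _ (huht x hx)
  choose c hc1 hc2 using hcex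
  -- the combined index
  set ζ : ∀ x, x ∈ H → Ordinal := fun x hx => p (p (a x hx) (c x hx)) (η x hx) with hζdef
  have hpac : ∀ x (hx : x ∈ H), p (a x hx) (c x hx) < α.cof.ord ∧
      a x hx ≤ p (a x hx) (c x hx) ∧ c x hx ≤ p (a x hx) (c x hx) :=
    fun x hx => hp1 _ _ (ha1 x hx) (hc1 x hx)
  have hζ1 : ∀ x (hx : x ∈ H), ζ x hx < α.cof.ord ∧
      p (a x hx) (c x hx) ≤ ζ x hx ∧ η x hx ≤ ζ x hx :=
    fun x hx => hp1 _ _ (hpac x hx).1 (hη1 x hx)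
  have hfmono : ∀ {ξ ξ' : Ordinal}, ξ ≤ ξ' → ξ' < α.cof.ord → f ξ ≤ f ξ' := by
    intro ξ ξ' h h'
    rcases h.lt_or_eq with h1 | h1
    · exact (hf.1 _ _ h1 h').le
    · rw [h1]
  have hfζα : ∀ x (hx : x ∈ H), f (ζ x hx) < α := fun x hx => hf.2.1 _ (hζ1 x hx).1
  have hpickex : ∀ x (hx : x ∈ H), ∃ y, y < x ∧ treeHt hT y = f (ζ x hx) := by
    intro x hx
    apply treeHt_surj hT
    rw [hxht x hx]
    exact hfζα x hx
  choose pick hpick1 hpick2 using hpickex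
  refine ⟨f, hf, fun x => if h : x ∈ H then pick x h else x, ?_, ?_⟩
  · -- injectivity
    intro x hx x' hx' hee
    simp only [dif_pos hx, dif_pos hx'] at hee
    -- equal indices
    have hfeq : f (ζ x hx) = f (ζ x' hx') := by
      rw [← hpick2 x hx, ← hpick2 x' hx', hee]
    have hζeq : ζ x hx = ζ x' hx' := by
      rcases lt_trichotomy (ζ x hx) (ζ x' hx') with h1 | h1 | h1
      · exact absurd hfeq (ne_of_lt (hf.1 _ _ h1 (hζ1 x' hx').1))
      · exact h1
      · exact absurd hfeq.symm (ne_of_lt (hf.1 _ _ h1 (hζ1 x hx).1))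
    obtain ⟨hpp, hηeq⟩ := hp2 _ _ _ _ (hpac x hx).1 (hη1 x hx) (hpac x' hx').1 (hη1 x' hx') hζeq
    obtain ⟨haeq, hceq⟩ := hp2 _ _ _ _ (ha1 x hx) (hc1 x hx) (ha1 x' hx') (hc1 x' hx') hpp
    set y := pick x hx with hy
    have hyeq' : pick x' hx' = y := hee.symm
    -- the predecessors at the fibre level agree
    have haζ : a x hx ≤ ζ x hx := le_trans (hpac x hx).2.1 (hζ1 x hx).2.1
    have haζ' : a x' hx' ≤ ζ x' hx' := le_trans (hpac x' hx').2.1 (hζ1 x' hx').2.1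
    have hwy : π x ≤ y := by
      apply pred_le_of_ht_le hT (hπreg x hx) (hpick1 x hx)
      rw [ha2 x hx, hpick2 x hx]
      exact hfmono haζ (hζ1 x hx).1
    have hwy' : π x' ≤ y := by
      rw [← hyeq']
      apply pred_le_of_ht_le hT (hπreg x' hx') (hpick1 x' hx')
      rw [ha2 x' hx', hpick2 x' hx']
      exact hfmono haζ' (hζ1 x' hx').1
    have hweq : π x = π x' := by
      apply le_pred_eq hT hwy hwy'
      rw [ha2 x hx, ha2 x' hx', haeq]
    -- the fibre-map values agree
    have hcζ : c x hx ≤ ζ x hx := le_trans (hpac x hx).2.2 (hζ1 x hx).2.1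
    have hcζ' : c x' hx' ≤ ζ x' hx' := le_trans (hpac x' hx').2.2 (hζ1 x' hx').2.1
    have huy : P (π x) x ≤ y := by
      apply pred_le_of_ht_le hT (hPreg x hx) (hpick1 x hx)
      rw [hpick2 x hx]
      exact le_trans (hc2 x hx) (hfmono hcζ (hζ1 x hx).1)
    have huy' : P (π x') x' ≤ y := by
      rw [← hyeq']
      apply pred_le_of_ht_le hT (hPreg x' hx') (hpick1 x' hx')
      rw [hpick2 x' hx']
      exact le_trans (hc2 x' hx') (hfmono hcζ' (hζ1 x' hx').1)
    have hueq : P (π x) x = P (π x') x' := by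
      apply le_pred_eq hT huy huy'
      rw [hη2 x hx, hη2 x' hx', hηeq, hweq]
    -- conclude using injectivity on the fibre
    have hx'mem : x' ∈ {z | z ∈ H ∧ π z = π x} := ⟨hx', hweq.symm⟩
    apply hPinj (π x) (hmemfib x hx) hx'mem
    rw [hueq, hweq]
  · intro x hx
    dsimp only
    rw [dif_pos hx]
    exact ⟨hpick1 x hx, ζ x hx, (hζ1 x hx).1, hpick2 x hx⟩
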